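/- Let V(y) = Σ_{k=−2}^{M} a_k y^k be a Laurent polynomial with real coefficients a_k ≥ 0, where M ≥ 1, a_{−2} > 0 and a_M > 0, and assume a_k > 0 for at least one odd index k. Let τ > 0 be the unique positive real number with V′(τ) = 0. Assume that the polynomial P(y) = y²(V(y) − V(τ)) ∈ ℝ[y] has exactly one complex root, counted with multiplicity, in the open disk {z ∈ ℂ : |z| < τ}. Then this root is a real number τ₂ with −τ < τ₂ < 0, it satisfies V′(τ₂) > 0, and consequently 1/(τ₂ · V′(τ₂)) < 0. -/

import Mathlib

open Polynomial in
/-- Let `V(y) = Σ_{k=−2}^{M} a_k y^k` be a Laurent polynomial with nonnegative real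
coefficients, `a_{−2} > 0`, `a_M > 0`, at least one positive coefficient at an odd index,
and critical point `τ > 0`, `V′(τ) = 0`. If the polynomial `P(y) = y²(V(y) − V(τ))` has
exactly one complex root (with multiplicity) in the open disk `|z| < τ`, then this root is
a real number `τ₂` with `−τ < τ₂ < 0`, `V′(τ₂) > 0`, and `1/(τ₂·V′(τ₂)) < 0`. -/
theorem unique_small_root_real_neg (M : ℤ) (hM : 1 ≤ M) (a : ℤ → ℝ)
    (ha : ∀ k, 0 ≤ a k) (ha2 : 0 < a (-2)) (haM : 0 < a M)
    (hodd : ∃ k, Odd k ∧ -2 ≤ k ∧ k ≤ M ∧ 0 < a k)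
    (V : ℝ → ℝ) (hV : V = fun y => ∑ k ∈ Finset.Icc (-2 : ℤ) M, a k * y ^ k)
    (τ : ℝ) (hτ : 0 < τ) (hcrit : deriv V τ = 0)
    (P : ℝ[X])
    (hP : P = (∑ k ∈ Finset.Icc (-2 : ℤ) M, C (a k) * X ^ (k + 2).toNat)
        - C (V τ) * X ^ 2)
    (hone : Multiset.card
        ((P.map (algebraMap ℝ ℂ)).roots.filter fun z => ‖z‖ < τ) = 1) :
    ∃ τ₂ : ℝ, -τ < τ₂ ∧ τ₂ < 0 ∧
      ((P.map (algebraMap ℝ ℂ)).roots.filter fun z => ‖z‖ < τ) = {(τ₂ : ℂ)} ∧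
      0 < deriv V τ₂ ∧ 1 / (τ₂ * deriv V τ₂) < 0 := by
  have hτ0 : τ ≠ 0 := ne_of_gt hτ
  -- the key pointwise identity
  have key : ∀ y : ℝ, y ≠ 0 → P.eval y = y ^ 2 * (V y - V τ) := by
    intro y hy
    rw [hP, hV]
    simp only [eval_sub, eval_mul, eval_pow, eval_C, eval_X, eval_finset_sum]
    have h1 : ∀ k ∈ Finset.Icc (-2 : ℤ) M,
        a k * y ^ (k + 2).toNat = y ^ 2 * (a k * y ^ k) := by
      intro k hk
      have hk2 : (0 : ℤ) ≤ k + 2 := by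
        have := (Finset.mem_Icc.mp hk).1; omega
      have hpow : (y : ℝ) ^ ((k + 2).toNat) = y ^ ((k : ℤ) + 2) := by
        rw [← zpow_natCast, Int.toNat_of_nonneg hk2]
      rw [hpow, zpow_add₀ hy, zpow_two, sq]
      ring
    rw [Finset.sum_congr rfl h1, ← Finset.mul_sum]
    ring
  -- value at 0
  have hP0 : P.eval 0 = a (-2) := by
    rw [hP]
    simp only [eval_sub, eval_mul, eval_pow, eval_C, eval_X, eval_finset_sum]
    rw [Finset.sum_eq_single (-2 : ℤ)]
    · norm_num
    · intro k hk hkne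
      have hk1 := (Finset.mem_Icc.mp hk).1
      have : (k + 2).toNat ≠ 0 := by omega
      simp [zero_pow this]
    · intro h
      exact absurd (Finset.mem_Icc.mpr ⟨le_refl _, by omega⟩) h
  have hPne : P ≠ 0 := by
    intro h
    rw [h] at hP0
    simp at hP0
    exact absurd hP0.symm (ne_of_gt ha2)
  -- V(-τ) < V(τ)
  have hVneg : V (-τ) < V τ := by
    rw [hV]
    obtain ⟨k₀, hk₀odd, hk₀l, hk₀r, hk₀pos⟩ := hodd
    apply Finset.sum_lt_sum
    · intro k hk
      apply mul_le_mul_of_nonneg_left _ (ha k)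
      have hmul : (-τ) ^ k = (-1 : ℝ) ^ k * τ ^ k := by
        rw [← mul_zpow]; norm_num
      rw [hmul]
      rcases Int.even_or_odd k with he | ho
      · rw [he.neg_one_zpow, one_mul]
      · rw [ho.neg_one_zpow]
        have : (0:ℝ) < τ ^ k := zpow_pos hτ _
        linarith
    · refine ⟨k₀, Finset.mem_Icc.mpr ⟨hk₀l, hk₀r⟩, ?_⟩
      apply mul_lt_mul_of_pos_left _ hk₀pos
      calc (-τ) ^ k₀ < 0 := hk₀odd.zpow_neg (neg_neg_of_pos hτ)
        _ < τ ^ k₀ := zpow_pos hτ _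
  have hPnegτ : P.eval (-τ) < 0 := by
    rw [key (-τ) (by simpa using hτ0), neg_sq]
    have h1 : V (-τ) - V τ < 0 := sub_neg.mpr hVneg
    have h2 : (0:ℝ) < τ ^ 2 := by positivity
    nlinarith
  -- intermediate value: a root in (-τ, 0)
  obtain ⟨τ₂, hτ₂mem, hτ₂root⟩ :
      ∃ x ∈ Set.Ioo (-τ) (0 : ℝ), P.eval x = 0 := by
    have h0 : (0 : ℝ) ∈ Set.Ioo (P.eval (-τ)) (P.eval 0) := by
      constructor
      · exact hPnegτ
      · rw [hP0]; exact ha2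
    have := intermediate_value_Ioo (by linarith : -τ ≤ (0:ℝ)) (P.continuous.continuousOn)
    obtain ⟨x, hx, hfx⟩ := this h0
    exact ⟨x, hx, hfx⟩
  obtain ⟨hτ₂l, hτ₂r⟩ := hτ₂mem
  have hτ₂ne : τ₂ ≠ 0 := ne_of_lt hτ₂r
  -- complex picture
  set f := algebraMap ℝ ℂ
  have hmapne : P.map f ≠ 0 := by
    simpa using (Polynomial.map_ne_zero (f := f) hPne)
  have hevalC : ∀ (Q : Polynomial ℝ) (x : ℝ), (Q.map f).eval (x : ℂ) = ((Q.eval x : ℝ) : ℂ) := by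
    intro Q x
    rw [Polynomial.eval_map]
    exact Polynomial.eval₂_at_apply f x
  have hrootC : (τ₂ : ℂ) ∈ (P.map f).roots := by
    rw [Polynomial.mem_roots hmapne]
    simp [Polynomial.IsRoot, hevalC, hτ₂root]
  have habs : ‖(τ₂ : ℂ)‖ < τ := by
    rw [Complex.norm_real, Real.norm_eq_abs, abs_of_neg hτ₂r]
    linarith
  have hmemS : (τ₂ : ℂ) ∈
      ((P.map f).roots.filter fun z => ‖z‖ < τ) :=
    Multiset.mem_filter.mpr ⟨hrootC, habs⟩
  have hS : ((P.map f).roots.filter fun z => ‖z‖ < τ) = {(τ₂ : ℂ)} := by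
    obtain ⟨b, hb⟩ := Multiset.card_eq_one.mp hone
    rw [hb] at hmemS ⊢
    rw [Multiset.mem_singleton.mp hmemS]
  -- uniqueness of real roots in the disk
  have hu : ∀ x : ℝ, -τ < x → x < 0 → P.eval x = 0 → x = τ₂ := by
    intro x hx1 hx2 hx0
    have hrx : (x : ℂ) ∈ ((P.map f).roots.filter fun z => ‖z‖ < τ) := by
      refine Multiset.mem_filter.mpr ⟨?_, ?_⟩
      · rw [Polynomial.mem_roots hmapne]
        simp [Polynomial.IsRoot, hevalC P, hx0]
      · rw [Complex.norm_real, Real.norm_eq_abs, abs_of_neg hx2]; linarith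
    rw [hS, Multiset.mem_singleton] at hrx
    exact_mod_cast hrx
  -- P is positive on (τ₂, 0]
  have hpos : ∀ x : ℝ, τ₂ < x → x ≤ 0 → 0 < P.eval x := by
    intro x hx1 hx2
    rcases eq_or_lt_of_le hx2 with rfl | hx2'
    · rw [hP0]; exact ha2
    by_contra h
    push_neg at h
    rcases eq_or_lt_of_le h with h0 | hlt
    · exact absurd (hu x (by linarith) hx2' h0) (by linarith [hx1])
    · have h0 : (0 : ℝ) ∈ Set.Ioo (P.eval x) (P.eval 0) := ⟨hlt, by rw [hP0]; exact ha2⟩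
      obtain ⟨r, hr, hr0⟩ := intermediate_value_Ioo (le_of_lt hx2') P.continuous.continuousOn h0
      have := hu r (by linarith [hr.1]) hr.2 hr0
      linarith [hr.1]
  -- derivative of P at τ₂ is nonnegative (from the right)
  have hdP := P.hasDerivAt τ₂
  have hd_nonneg : 0 ≤ P.derivative.eval τ₂ := by
    have H2 : HasDerivWithinAt (fun x => P.eval x) (P.derivative.eval τ₂) (Set.Ioi τ₂) τ₂ :=
      hdP.hasDerivWithinAt
    rw [hasDerivWithinAt_iff_tendsto_slope' (Set.notMem_Ioi_self)] at H2
    refine ge_of_tendsto H2 ?_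
    filter_upwards [Ioo_mem_nhdsGT_of_mem ⟨le_refl τ₂, hτ₂r⟩] with x hx
    rw [slope_def_field]
    rw [div_eq_mul_inv]
    apply mul_nonneg
    · rw [hτ₂root, sub_zero]
      exact (hpos x hx.1 hx.2.le).le
    · rw [inv_nonneg]
      linarith [hx.1]
  -- simple root, hence derivative is nonzero
  have hrm : (P.map f).rootMultiplicity (τ₂ : ℂ) = 1 := by
    have hc : ((P.map f).roots.filter fun z => ‖z‖ < τ).count (τ₂ : ℂ)
        = (P.map f).roots.count (τ₂ : ℂ) := Multiset.count_filter_of_pos habs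
    rw [hS, Multiset.count_singleton, if_pos rfl] at hc
    rw [← Polynomial.count_roots, ← hc]
  have hd_ne : P.derivative.eval τ₂ ≠ 0 := by
    intro h0
    have h1 : 1 < (P.map f).rootMultiplicity (τ₂ : ℂ) := by
      rw [Polynomial.one_lt_rootMultiplicity_iff_isRoot hmapne]
      constructor
      · simp [Polynomial.IsRoot, hevalC, hτ₂root]
      · rw [Polynomial.IsRoot, Polynomial.derivative_map, hevalC, h0]
        simp
    omega
  have hd_pos : 0 < P.derivative.eval τ₂ := lt_of_le_of_ne hd_nonneg (Ne.symm hd_ne)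
  -- differentiability of V at τ₂
  have hVd : HasDerivAt V (deriv V τ₂) τ₂ := by
    have : HasDerivAt V (∑ k ∈ Finset.Icc (-2 : ℤ) M, a k * ((k : ℝ) * τ₂ ^ (k - 1))) τ₂ := by
      rw [hV]
      apply HasDerivAt.fun_sum
      intro k _
      exact (hasDerivAt_zpow k τ₂ (Or.inl hτ₂ne)).const_mul (a k)
    exact this.differentiableAt.hasDerivAt
  have hVval : V τ₂ = V τ := by
    have := key τ₂ hτ₂ne
    rw [hτ₂root] at this
    have h2 : τ₂ ^ 2 ≠ 0 := pow_ne_zero _ hτ₂ne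
    have := (mul_eq_zero.mp this.symm).resolve_left h2
    linarith [sub_eq_zero.mp this]
  -- identify the derivatives
  have Hq : HasDerivAt (fun y => y ^ 2 * (V y - V τ))
      ((↑2 * τ₂ ^ 1) * (V τ₂ - V τ) + τ₂ ^ 2 * deriv V τ₂) τ₂ :=
    (hasDerivAt_pow 2 τ₂).mul (hVd.sub_const (V τ))
  have heq : (fun x => P.eval x) =ᶠ[nhds τ₂] fun y => y ^ 2 * (V y - V τ) := by
    filter_upwards [(isOpen_compl_singleton (x := (0:ℝ))).mem_nhds hτ₂ne] with x hx
    exact key x hx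
  have hPq : P.derivative.eval τ₂ = τ₂ ^ 2 * deriv V τ₂ := by
    have := hdP.unique (Hq.congr_of_eventuallyEq heq)
    rw [this, hVval]
    ring
  have hτ₂sq : 0 < τ₂ ^ 2 := by positivity
  have hderivpos : 0 < deriv V τ₂ := by
    rw [hPq] at hd_pos
    by_contra h
    push_neg at h
    nlinarith
  refine ⟨τ₂, hτ₂l, hτ₂r, hS, hderivpos, ?_⟩
  rw [one_div_neg]
  exact mul_neg_of_neg_of_pos hτ₂r hderivpos
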